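/- arXiv:1309.2494 — 6 statements merged into one kernel-verified Lean document; each statement's English description precedes it below -/
import Mathlib

section
/- Let Ω = ℝ × (−1,1) ⊂ ℝ², Ω₊ = Ω ∩ {x₁ ≥ 0}, Ω₋ = Ω ∩ {x₁ ≤ 0}, and let θ ∈ (0, π). Let m₂ : Ω → [−1,1] be measurable, and let m̄₂(x₁) := (1/2) ∫_{−1}^{1} m₂(x₁, x₃) dx₃ denote its vertical average. Assume: (a) m̄₂ is continuous on ℝ; (b) ∫_Ω |m₂(x) − m̄₂(x₁)|² dx < ∞; (c) ∫_Ω ( |m₂(x)| − sin θ )² dx < ∞; (d) |m̄₂(s)| → sin θ as |s| → ∞; (e) limsup_{s→−∞} m̄₂(s) ≤ 0 and liminf_{s→+∞} m̄₂(s) ≥ 0. Then ∫_{Ω₋} ( m₂(x) + sin θ )² dx + ∫_{Ω₊} ( m₂(x) − sin θ )² dx < ∞. -/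
open MeasureTheory

/-- The strip `Ω = ℝ × (−1,1) ⊂ ℝ²`. -/
def strip : Set (ℝ × ℝ) := (Set.univ : Set ℝ) ×ˢ Set.Ioo (-1 : ℝ) 1

/-- `Ω₊ = Ω ∩ {x₁ ≥ 0}`. -/
def stripPlus : Set (ℝ × ℝ) := Set.Ici (0 : ℝ) ×ˢ Set.Ioo (-1 : ℝ) 1

/-- `Ω₋ = Ω ∩ {x₁ ≤ 0}`. -/
def stripMinus : Set (ℝ × ℝ) := Set.Iic (0 : ℝ) ×ˢ Set.Ioo (-1 : ℝ) 1

lemma ptwise {u v σ : ℝ} (hσ : 0 ≤ σ) (hv : 0 ≤ v) :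
    (u - σ) ^ 2 ≤ 2 * (|u| - σ) ^ 2 + 8 * (u - v) ^ 2 := by
  rcases abs_cases u with ⟨h, hu⟩ | ⟨h, hu⟩
  · rw [h]; nlinarith [sq_nonneg (u - σ), sq_nonneg (u - v)]
  · rw [h]
    nlinarith [sq_nonneg (3 * u + σ), sq_nonneg v, mul_nonneg hv (le_of_lt (neg_pos.2 hu))]

lemma finite_box (a b : ℝ) :
    (volume (Set.Icc a b ×ˢ Set.Ioo (-1 : ℝ) 1)) < ⊤ := by
  rw [MeasureTheory.Measure.volume_eq_prod, MeasureTheory.Measure.prod_prod,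
    Real.volume_Icc, Real.volume_Ioo]
  exact ENNReal.mul_lt_top ENNReal.ofReal_lt_top ENNReal.ofReal_lt_top

theorem stmt_2 (θ : ℝ) (hθ : θ ∈ Set.Ioo 0 Real.pi)
    (m₂ : ℝ × ℝ → ℝ) (hmeas : Measurable m₂)
    (hrange : ∀ x, m₂ x ∈ Set.Icc (-1 : ℝ) 1)
    (mbar : ℝ → ℝ)
    (hmbar : ∀ x₁ : ℝ, mbar x₁ = (1 / 2) * ∫ x₃ in (-1 : ℝ)..1, m₂ (x₁, x₃))
    (ha : Continuous mbar)
    (hb : (∫⁻ x in strip, ENNReal.ofReal ((m₂ x - mbar x.1) ^ 2)) < ⊤)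
    (hc : (∫⁻ x in strip, ENNReal.ofReal ((|m₂ x| - Real.sin θ) ^ 2)) < ⊤)
    (hd₁ : Filter.Tendsto (fun s => |mbar s|) Filter.atTop (nhds (Real.sin θ)))
    (hd₂ : Filter.Tendsto (fun s => |mbar s|) Filter.atBot (nhds (Real.sin θ)))
    (he₁ : Filter.limsup mbar Filter.atBot ≤ 0)
    (he₂ : 0 ≤ Filter.liminf mbar Filter.atTop) :
    (∫⁻ x in stripMinus, ENNReal.ofReal ((m₂ x + Real.sin θ) ^ 2)) +
      (∫⁻ x in stripPlus, ENNReal.ofReal ((m₂ x - Real.sin θ) ^ 2)) < ⊤ := by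
  obtain ⟨hθ0, hθπ⟩ := hθ
  have hs : 0 < Real.sin θ := Real.sin_pos_of_pos_of_lt_pi hθ0 hθπ
  set s := Real.sin θ with hsdef
  have hs1 : s ≤ 1 := Real.sin_le_one θ
  -- eventual sign at +∞
  have habsT : ∀ᶠ t in Filter.atTop, s / 2 < |mbar t| :=
    hd₁.eventually (eventually_gt_nhds (by linarith))
  have hbddT : ∀ᶠ t in Filter.atTop, |mbar t| < s + 1 :=
    hd₁.eventually (eventually_lt_nhds (by linarith))
  have h2T : ∀ᶠ t in Filter.atTop, -(s / 2) < mbar t := by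
    exact Filter.eventually_lt_of_lt_liminf (by linarith)
      ⟨-(s + 1), Filter.eventually_map.mpr
        (hbddT.mono fun t ht => by have := abs_lt.mp ht; linarith [this.1])⟩
  have hsignT : ∀ᶠ t in Filter.atTop, 0 ≤ mbar t := by
    filter_upwards [habsT, h2T] with t h1 h2
    rcases abs_cases (mbar t) with ⟨h, h'⟩ | ⟨h, h'⟩ <;> linarith
  obtain ⟨R₀, hR₀⟩ := Filter.eventually_atTop.mp hsignT
  set R : ℝ := max R₀ 0 with hRdef
  have hR0 : 0 ≤ R := le_max_right _ _
  have hRsign : ∀ t, R ≤ t → 0 ≤ mbar t := fun t ht => hR₀ t (le_trans (le_max_left _ _) ht)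
  -- eventual sign at -∞
  have habsB : ∀ᶠ t in Filter.atBot, s / 2 < |mbar t| :=
    hd₂.eventually (eventually_gt_nhds (by linarith))
  have hbddB : ∀ᶠ t in Filter.atBot, |mbar t| < s + 1 :=
    hd₂.eventually (eventually_lt_nhds (by linarith))
  have h2B : ∀ᶠ t in Filter.atBot, mbar t < s / 2 := by
    exact Filter.eventually_lt_of_limsup_lt (by linarith)
      ⟨s + 1, Filter.eventually_map.mpr
        (hbddB.mono fun t ht => by have := abs_lt.mp ht; linarith [this.2])⟩
  have hsignB : ∀ᶠ t in Filter.atBot, mbar t ≤ 0 := by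
    filter_upwards [habsB, h2B] with t h1 h2
    rcases abs_cases (mbar t) with ⟨h, h'⟩ | ⟨h, h'⟩ <;> linarith
  obtain ⟨L₀, hL₀⟩ := Filter.eventually_atBot.mp hsignB
  set L : ℝ := min L₀ 0 with hLdef
  have hL0 : L ≤ 0 := min_le_right _ _
  have hLsign : ∀ t, t ≤ L → mbar t ≤ 0 := fun t ht => hL₀ t (le_trans ht (min_le_left _ _))
  -- measurable bound functions
  have hg : Measurable fun x : ℝ × ℝ => ENNReal.ofReal ((|m₂ x| - s) ^ 2) :=
    ((hmeas.abs.sub measurable_const).pow_const 2).ennreal_ofReal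
  have hh : Measurable fun x : ℝ × ℝ => ENNReal.ofReal ((m₂ x - mbar x.1) ^ 2) :=
    ((hmeas.sub (ha.measurable.comp measurable_fst)).pow_const 2).ennreal_ofReal
  -- generic tail bound
  have tailbound : ∀ (T : Set (ℝ × ℝ)), T ⊆ strip →
      (∫⁻ x in T, (2 * ENNReal.ofReal ((|m₂ x| - s) ^ 2)
        + 8 * ENNReal.ofReal ((m₂ x - mbar x.1) ^ 2))) < ⊤ := by
    intro T hT
    rw [lintegral_add_left (hg.const_mul 2), lintegral_const_mul' 2 _ (by norm_num),
      lintegral_const_mul' 8 _ (by norm_num)]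
    have h1 : (∫⁻ x in T, ENNReal.ofReal ((|m₂ x| - s) ^ 2)) < ⊤ :=
      lt_of_le_of_lt (lintegral_mono_set hT) hc
    have h2 : (∫⁻ x in T, ENNReal.ofReal ((m₂ x - mbar x.1) ^ 2)) < ⊤ :=
      lt_of_le_of_lt (lintegral_mono_set hT) hb
    exact ENNReal.add_lt_top.mpr
      ⟨ENNReal.mul_lt_top (by norm_num) h1, ENNReal.mul_lt_top (by norm_num) h2⟩
  -- bound on a box
  have boxbound : ∀ (a b : ℝ) (f : ℝ × ℝ → ℝ), (∀ x, f x ^ 2 ≤ 4) →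
      (∫⁻ x in Set.Icc a b ×ˢ Set.Ioo (-1 : ℝ) 1, ENNReal.ofReal (f x ^ 2)) < ⊤ := by
    intro a b f hf
    calc (∫⁻ x in Set.Icc a b ×ˢ Set.Ioo (-1 : ℝ) 1, ENNReal.ofReal (f x ^ 2))
        ≤ ∫⁻ _ in Set.Icc a b ×ˢ Set.Ioo (-1 : ℝ) 1, ENNReal.ofReal 4 :=
          lintegral_mono fun x => ENNReal.ofReal_le_ofReal (hf x)
      _ = ENNReal.ofReal 4 * volume (Set.Icc a b ×ˢ Set.Ioo (-1 : ℝ) 1) :=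
          setLIntegral_const _ _
      _ < ⊤ := ENNReal.mul_lt_top ENNReal.ofReal_lt_top (finite_box a b)
  -- pointwise ofReal bound, plus side
  have ofRealPt : ∀ x : ℝ × ℝ, 0 ≤ mbar x.1 →
      ENNReal.ofReal ((m₂ x - s) ^ 2) ≤
        2 * ENNReal.ofReal ((|m₂ x| - s) ^ 2) + 8 * ENNReal.ofReal ((m₂ x - mbar x.1) ^ 2) := by
    intro x hv
    calc ENNReal.ofReal ((m₂ x - s) ^ 2)
        ≤ ENNReal.ofReal (2 * (|m₂ x| - s) ^ 2 + 8 * (m₂ x - mbar x.1) ^ 2) :=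
          ENNReal.ofReal_le_ofReal (ptwise (le_of_lt hs) hv)
      _ = ENNReal.ofReal (2 * (|m₂ x| - s) ^ 2) + ENNReal.ofReal (8 * (m₂ x - mbar x.1) ^ 2) :=
          ENNReal.ofReal_add (by positivity) (by positivity)
      _ = 2 * ENNReal.ofReal ((|m₂ x| - s) ^ 2) + 8 * ENNReal.ofReal ((m₂ x - mbar x.1) ^ 2) := by
          rw [ENNReal.ofReal_mul (by norm_num), ENNReal.ofReal_mul (by norm_num)]
          norm_num
  have ofRealPt' : ∀ x : ℝ × ℝ, mbar x.1 ≤ 0 →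
      ENNReal.ofReal ((m₂ x + s) ^ 2) ≤
        2 * ENNReal.ofReal ((|m₂ x| - s) ^ 2) + 8 * ENNReal.ofReal ((m₂ x - mbar x.1) ^ 2) := by
    intro x hv
    have h := ptwise (u := -(m₂ x)) (v := -(mbar x.1)) (le_of_lt hs) (by linarith)
    rw [abs_neg] at h
    calc ENNReal.ofReal ((m₂ x + s) ^ 2)
        ≤ ENNReal.ofReal (2 * (|m₂ x| - s) ^ 2 + 8 * (m₂ x - mbar x.1) ^ 2) :=
          ENNReal.ofReal_le_ofReal (by nlinarith [h])
      _ = 2 * ENNReal.ofReal ((|m₂ x| - s) ^ 2) + 8 * ENNReal.ofReal ((m₂ x - mbar x.1) ^ 2) := by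
          rw [ENNReal.ofReal_add (by positivity) (by positivity),
            ENNReal.ofReal_mul (by norm_num), ENNReal.ofReal_mul (by norm_num)]
          norm_num
  -- plus side
  have hplus : (∫⁻ x in stripPlus, ENNReal.ofReal ((m₂ x - s) ^ 2)) < ⊤ := by
    have hsub : stripPlus ⊆
        (Set.Icc 0 R ×ˢ Set.Ioo (-1 : ℝ) 1) ∪ (Set.Ici R ×ˢ Set.Ioo (-1 : ℝ) 1) := by
      rintro ⟨t, y⟩ ⟨ht, hy⟩
      rcases le_total t R with h | h
      · exact Or.inl ⟨⟨ht, h⟩, hy⟩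
      · exact Or.inr ⟨h, hy⟩
    refine lt_of_le_of_lt (le_trans (lintegral_mono_set hsub) (lintegral_union_le _ _ _)) ?_
    apply ENNReal.add_lt_top.mpr
    constructor
    · apply boxbound
      intro x
      have h := hrange x
      nlinarith [h.1, h.2]
    · refine lt_of_le_of_lt (setLIntegral_mono ((hg.const_mul 2).add (hh.const_mul 8)) ?_) ?_
      · rintro ⟨t, y⟩ ⟨ht, hy⟩
        exact ofRealPt (t, y) (hRsign t ht)
      · exact tailbound _ (Set.prod_mono (Set.subset_univ _) subset_rfl)
  have hminus : (∫⁻ x in stripMinus, ENNReal.ofReal ((m₂ x + s) ^ 2)) < ⊤ := by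
    have hsub : stripMinus ⊆
        (Set.Iic L ×ˢ Set.Ioo (-1 : ℝ) 1) ∪ (Set.Icc L 0 ×ˢ Set.Ioo (-1 : ℝ) 1) := by
      rintro ⟨t, y⟩ ⟨ht, hy⟩
      rcases le_total t L with h | h
      · exact Or.inl ⟨h, hy⟩
      · exact Or.inr ⟨⟨h, ht⟩, hy⟩
    refine lt_of_le_of_lt (le_trans (lintegral_mono_set hsub) (lintegral_union_le _ _ _)) ?_
    apply ENNReal.add_lt_top.mpr
    constructor
    · refine lt_of_le_of_lt (setLIntegral_mono ((hg.const_mul 2).add (hh.const_mul 8)) ?_) ?_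
      · rintro ⟨t, y⟩ ⟨ht, hy⟩
        exact ofRealPt' (t, y) (hLsign t ht)
      · exact tailbound _ (Set.prod_mono (Set.subset_univ _) subset_rfl)
    · apply boxbound
      intro x
      have h := hrange x
      nlinarith [h.1, h.2]
  exact ENNReal.add_lt_top.mpr ⟨hminus, hplus⟩
end

section
/- Let N ≥ 1 and let f ∈ C²(ℝ^N, ℝ) be a non-negative function whose Hessian is uniformly bounded, i.e. K := sup_{x ∈ ℝ^N} ‖D²f(x)‖ < ∞ (operator norm). Then the function √f is Lipschitz continuous with Lipschitz constant √(K/2): for all x, y ∈ ℝ^N, |√(f(x)) − √(f(y))| ≤ √(K/2) · |x − y|. -/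
open Set

/-- 1-D second order Taylor upper bound for nonnegative times. -/
lemma aux_taylor_1d {φ φ' φ'' : ℝ → ℝ} {M : ℝ}
    (h1 : ∀ t, HasDerivAt φ (φ' t) t)
    (h2 : ∀ t, HasDerivAt φ' (φ'' t) t)
    (hb : ∀ t, |φ'' t| ≤ M) {t : ℝ} (ht : 0 ≤ t) :
    φ t ≤ φ 0 + t * φ' 0 + M / 2 * t ^ 2 := by
  -- MVT for φ'
  have hMVT : ∀ s : ℝ, 0 ≤ s → φ' s - φ' 0 ≤ M * s := by
    intro s hs
    have := Convex.norm_image_sub_le_of_norm_hasDerivWithin_le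
      (f := φ') (f' := φ'') (C := M) (s := univ)
      (fun u _ => (h2 u).hasDerivWithinAt)
      (fun u _ => by simpa [Real.norm_eq_abs] using hb u)
      convex_univ (mem_univ 0) (mem_univ s)
    simp only [Real.norm_eq_abs, sub_zero, abs_of_nonneg hs] at this
    have h2' := le_trans (le_abs_self _) this
    linarith
  set ψ : ℝ → ℝ := fun s => φ 0 + s * φ' 0 + M / 2 * s ^ 2 - φ s with hψdef
  have hψ : ∀ s, HasDerivAt ψ (φ' 0 + M * s - φ' s) s := by
    intro s
    have h3 : HasDerivAt (fun u : ℝ => u * φ' 0) (φ' 0) s := by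
      simpa using (hasDerivAt_id s).mul_const (φ' 0)
    have h4 : HasDerivAt (fun u : ℝ => M / 2 * u ^ 2) (M * s) s := by
      have := (hasDerivAt_pow 2 s).const_mul (M / 2)
      exact this.congr_deriv (by ring)
    have := (((hasDerivAt_const s (φ 0)).add h3).add h4).sub (h1 s)
    exact this.congr_deriv (by ring)
  have hmono : MonotoneOn ψ (Icc 0 t) := by
    apply monotoneOn_of_deriv_nonneg (convex_Icc 0 t)
    · exact fun s _ => (hψ s).continuousAt.continuousWithinAt
    · intro s _
      exact (hψ s).differentiableAt.differentiableWithinAt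
    · intro s hs
      rw [interior_Icc] at hs
      rw [(hψ s).deriv]
      have := hMVT s (le_of_lt hs.1)
      nlinarith [hs.1]
  have h0t : (0:ℝ) ∈ Icc (0:ℝ) t := ⟨le_refl 0, ht⟩
  have htt : t ∈ Icc (0:ℝ) t := ⟨ht, le_refl t⟩
  have := hmono h0t htt ht
  have hψ0 : ψ 0 = 0 := by simp [hψdef]
  have hψt : ψ t = φ 0 + t * φ' 0 + M / 2 * t ^ 2 - φ t := rfl
  rw [hψ0, hψt] at this
  linarith


/-- The key pointwise gradient estimate: `|∇f|² ≤ 2 K f`. -/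
lemma aux_grad_sq {E : Type*} [NormedAddCommGroup E] [NormedSpace ℝ E]
    {f : E → ℝ} (hf : ContDiff ℝ 2 f) (hpos : ∀ x, 0 ≤ f x)
    {K : ℝ} (hK : ∀ x, ‖iteratedFDeriv ℝ 2 f x‖ ≤ K)
    (z h : E) : (fderiv ℝ f z h) ^ 2 ≤ 2 * K * f z * ‖h‖ ^ 2 := by
  have hfd : Differentiable ℝ f := hf.differentiable two_ne_zero
  have hfd' : Differentiable ℝ (fderiv ℝ f) :=
    (hf.fderiv_right (m := 1) (by norm_num)).differentiable one_ne_zero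
  have hline : ∀ (g : E) (t : ℝ), HasDerivAt (fun s : ℝ => z + s • g) g t := by
    intro g t
    simpa using ((hasDerivAt_id t).smul_const g).const_add z
  have key : ∀ (g : E) (t : ℝ), 0 ≤ t →
      f (z + t • g) ≤ f z + t * (fderiv ℝ f z g) + (K * ‖g‖ ^ 2) / 2 * t ^ 2 := by
    intro g t ht
    have h1 : ∀ u : ℝ, HasDerivAt (fun s : ℝ => f (z + s • g))
        (fderiv ℝ f (z + u • g) g) u := fun u =>
      (hfd _).hasFDerivAt.comp_hasDerivAt u (hline g u)
    have h2 : ∀ u : ℝ, HasDerivAt (fun s : ℝ => fderiv ℝ f (z + s • g) g)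
        (fderiv ℝ (fderiv ℝ f) (z + u • g) g g) u := by
      intro u
      have hd1 : HasDerivAt (fun s : ℝ => fderiv ℝ f (z + s • g))
          (fderiv ℝ (fderiv ℝ f) (z + u • g) g) u :=
        (hfd' _).hasFDerivAt.comp_hasDerivAt u (hline g u)
      exact
        ((ContinuousLinearMap.apply ℝ ℝ g).hasFDerivAt).comp_hasDerivAt u hd1
    have hb : ∀ u : ℝ, |fderiv ℝ (fderiv ℝ f) (z + u • g) g g| ≤ K * ‖g‖ ^ 2 := by
      intro u
      set p := z + u • g
      have e : fderiv ℝ (fderiv ℝ f) p g g = iteratedFDeriv ℝ 2 f p ![g, g] := by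
        rw [iteratedFDeriv_two_apply]
        simp
      rw [e, ← Real.norm_eq_abs]
      calc ‖iteratedFDeriv ℝ 2 f p ![g, g]‖
          ≤ ‖iteratedFDeriv ℝ 2 f p‖ * ∏ i, ‖(![g, g] : Fin 2 → E) i‖ :=
            ContinuousMultilinearMap.le_opNorm _ _
        _ = ‖iteratedFDeriv ℝ 2 f p‖ * (‖g‖ * ‖g‖) := by
            simp [Fin.prod_univ_two]
        _ ≤ K * (‖g‖ * ‖g‖) := by
            apply mul_le_mul_of_nonneg_right (hK p) (by positivity)
        _ = K * ‖g‖ ^ 2 := by ring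
    have := aux_taylor_1d h1 h2 hb ht
    simpa [mul_comm] using this
  have hK0 : (0:ℝ) ≤ K := le_trans (norm_nonneg _) (hK z)
  set a := fderiv ℝ f z h with ha
  set c := K * ‖h‖ ^ 2 with hc
  have hc0 : 0 ≤ c := by positivity
  have hstep : ∀ δ : ℝ, 0 < δ → a ^ 2 ≤ 2 * (c + δ) * f z := by
    intro δ hδ
    set g : E := if 0 ≤ a then -h else h with hg
    have hng : ‖g‖ = ‖h‖ := by by_cases h' : 0 ≤ a <;> simp [hg, h']
    have hag : fderiv ℝ f z g = -|a| := by
      by_cases h' : 0 ≤ a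
      · simp [hg, h', map_neg, abs_of_nonneg h', ← ha]
      · simp [hg, h', abs_of_neg (lt_of_not_ge h'), ← ha]
    have hd : 0 < c + δ := by linarith
    set s := |a| / (c + δ) with hsdef
    have hs0 : 0 ≤ s := div_nonneg (abs_nonneg a) hd.le
    have hT := key g s hs0
    rw [hag, hng] at hT
    have hpos' := hpos (z + s • g)
    have h1 : 0 ≤ f z - s * |a| + c / 2 * s ^ 2 := by
      rw [← hc] at hT
      nlinarith [hT, hpos']
    have hs : s * (c + δ) = |a| := div_mul_cancel₀ _ (ne_of_gt hd)
    have habs : |a| ^ 2 = a ^ 2 := sq_abs a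
    -- from h1 : f z ≥ s²(c/2 + δ) after substituting s|a| = s²(c+δ)
    have h2 : s ^ 2 * (c / 2 + δ) ≤ f z := by nlinarith [h1, hs]
    have h3 : a ^ 2 = s ^ 2 * (c + δ) ^ 2 := by
      rw [← habs, ← hs]; ring
    nlinarith [h2, sq_nonneg s, hδ, hd, mul_le_mul_of_nonneg_left h2 (le_of_lt (by linarith : (0:ℝ) < 2 * (c + δ)))]
  have : a ^ 2 ≤ 2 * c * f z := by
    apply le_of_forall_pos_le_add
    intro ε hε
    have hfz1 : (0:ℝ) < f z + 1 := by linarith [hpos z]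
    set δ := ε / (2 * (f z + 1)) with hδdef
    have hδ : 0 < δ := by positivity
    have h4 := hstep δ hδ
    have h5 : 2 * δ * (f z + 1) = ε := by
      rw [hδdef]; field_simp
    have h6 : 2 * δ * f z ≤ ε := by nlinarith [hδ]
    nlinarith [h4, h6]
  calc a ^ 2 ≤ 2 * c * f z := this
    _ = 2 * K * f z * ‖h‖ ^ 2 := by rw [hc]; ring

theorem stmt_7 (N : ℕ) (hN : 1 ≤ N)
    (f : EuclideanSpace ℝ (Fin N) → ℝ)
    (hf : ContDiff ℝ 2 f) (hpos : ∀ x, 0 ≤ f x)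
    (K : ℝ) (hK : ∀ x, ‖iteratedFDeriv ℝ 2 f x‖ ≤ K) :
    ∀ x y : EuclideanSpace ℝ (Fin N),
      |Real.sqrt (f x) - Real.sqrt (f y)| ≤ Real.sqrt (K / 2) * ‖x - y‖ := by
  intro x y
  have hK0 : (0:ℝ) ≤ K := le_trans (norm_nonneg _) (hK 0)
  have hfd : Differentiable ℝ f := hf.differentiable two_ne_zero
  have main : ∀ ε : ℝ, 0 < ε →
      |Real.sqrt (f x + ε) - Real.sqrt (f y + ε)| ≤ Real.sqrt (K / 2) * ‖x - y‖ := by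
    intro ε hε
    set g : EuclideanSpace ℝ (Fin N) → ℝ := fun z => Real.sqrt (f z + ε) with hgdef
    set g' : EuclideanSpace ℝ (Fin N) → (EuclideanSpace ℝ (Fin N) →L[ℝ] ℝ) :=
      fun z => (1 / (2 * Real.sqrt (f z + ε))) • fderiv ℝ f z with hg'def
    have hder : ∀ z, HasFDerivAt g (g' z) z := by
      intro z
      have hu : (0:ℝ) < f z + ε := by linarith [hpos z]
      have h1 : HasFDerivAt (fun z => f z + ε) (fderiv ℝ f z) z :=
        (hfd z).hasFDerivAt.add_const ε
      exact (Real.hasDerivAt_sqrt hu.ne').comp_hasFDerivAt z h1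
    have hbound : ∀ z, ‖g' z‖ ≤ Real.sqrt (K / 2) := by
      intro z
      have hu : (0:ℝ) < f z + ε := by linarith [hpos z]
      have hsq : (0:ℝ) < Real.sqrt (f z + ε) := Real.sqrt_pos.mpr hu
      have hD : ‖fderiv ℝ f z‖ ≤ Real.sqrt (2 * K * (f z + ε)) := by
        apply ContinuousLinearMap.opNorm_le_bound _ (Real.sqrt_nonneg _)
        intro h
        have h1 := aux_grad_sq hf hpos hK z h
        have h2 : (fderiv ℝ f z h) ^ 2 ≤ (Real.sqrt (2 * K * (f z + ε)) * ‖h‖) ^ 2 := by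
          rw [mul_pow, Real.sq_sqrt (by positivity)]
          nlinarith [hpos z, hε, hK0, sq_nonneg ‖h‖, norm_nonneg h, mul_nonneg (mul_nonneg hK0 hε.le) (sq_nonneg ‖h‖)]
        calc ‖fderiv ℝ f z h‖ = Real.sqrt ((fderiv ℝ f z h) ^ 2) := by
              rw [Real.sqrt_sq_eq_abs, Real.norm_eq_abs]
          _ ≤ Real.sqrt ((Real.sqrt (2 * K * (f z + ε)) * ‖h‖) ^ 2) := Real.sqrt_le_sqrt h2
          _ = Real.sqrt (2 * K * (f z + ε)) * ‖h‖ := Real.sqrt_sq (by positivity)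
      have e1 : Real.sqrt (2 * K * (f z + ε)) = Real.sqrt (2 * K) * Real.sqrt (f z + ε) :=
        Real.sqrt_mul (by positivity) _
      calc ‖g' z‖ = |1 / (2 * Real.sqrt (f z + ε))| * ‖fderiv ℝ f z‖ := by
            simp only [hg'def]
            rw [norm_smul (1 / (2 * Real.sqrt (f z + ε))) (fderiv ℝ f z), Real.norm_eq_abs]
        _ ≤ (1 / (2 * Real.sqrt (f z + ε))) * Real.sqrt (2 * K * (f z + ε)) := by
            rw [abs_of_pos (by positivity)]
            exact mul_le_mul_of_nonneg_left hD (by positivity)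
        _ = Real.sqrt (2 * K) / 2 := by
            rw [e1]; field_simp
        _ = Real.sqrt (K / 2) := by
            rw [show K / 2 = (2 * K) / 2 ^ 2 by ring, Real.sqrt_div (by positivity),
              Real.sqrt_sq (by norm_num)]
    have hmvt := Convex.norm_image_sub_le_of_norm_hasFDerivWithin_le
      (fun z _ => (hder z).hasFDerivWithinAt)
      (fun z _ => hbound z) convex_univ (Set.mem_univ y) (Set.mem_univ x)
    simpa [hgdef, Real.norm_eq_abs] using hmvt
  apply le_of_forall_pos_le_add
  intro δ hδ
  set ε := (δ / 2) ^ 2 with hεdef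
  have hε : (0:ℝ) < ε := by positivity
  have hsqε : Real.sqrt ε = δ / 2 := by rw [hεdef, Real.sqrt_sq (by linarith)]
  have step : ∀ z, |Real.sqrt (f z) - Real.sqrt (f z + ε)| ≤ δ / 2 := by
    intro z
    have h1 : Real.sqrt (f z) ≤ Real.sqrt (f z + ε) := Real.sqrt_le_sqrt (by linarith)
    have h2 : Real.sqrt (f z + ε) ≤ Real.sqrt (f z) + δ / 2 := by
      rw [← hsqε]
      calc Real.sqrt (f z + ε)
          ≤ Real.sqrt ((Real.sqrt (f z) + Real.sqrt ε) ^ 2) := by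
            apply Real.sqrt_le_sqrt
            have e1 := Real.sq_sqrt (hpos z)
            have e2 := Real.sq_sqrt hε.le
            nlinarith [Real.sqrt_nonneg (f z), Real.sqrt_nonneg ε]
        _ = Real.sqrt (f z) + Real.sqrt ε := Real.sqrt_sq (by positivity)
    rw [abs_sub_comm, abs_of_nonneg (by linarith)]
    linarith
  have tri := abs_sub_le (Real.sqrt (f x)) (Real.sqrt (f x + ε)) (Real.sqrt (f y))
  have tri2 := abs_sub_le (Real.sqrt (f x + ε)) (Real.sqrt (f y + ε)) (Real.sqrt (f y))
  have hm := main ε hε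
  have sx := step x
  have sy := step y
  have sy' : |Real.sqrt (f y + ε) - Real.sqrt (f y)| ≤ δ / 2 := by
    rw [abs_sub_comm]; exact sy
  linarith
end

section
/- Let 0 < η < 1, A ≥ 1, c, c' ∈ ℝ and μ ∈ [0, 1). Define f : [A, A/η] → ℝ by f(x) = c' + (c − c') · ln( A / (η x) ) / ln(1/η). If |f(x)| ≤ μ for all x ∈ [A, A/η], then ∫_A^{A/η} f'(x)² / (1 − f(x)²) dx ≤ (c − c')² / ( (1 − μ²) · ln²(1/η) · A ). -/
open MeasureTheory

theorem stmt_11 (η A c c' μ : ℝ) (hη0 : 0 < η) (hη1 : η < 1) (hA : 1 ≤ A)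
    (hμ0 : 0 ≤ μ) (hμ1 : μ < 1)
    (f : ℝ → ℝ)
    (hf : ∀ x : ℝ, f x = c' + (c - c') * Real.log (A / (η * x)) / Real.log (1 / η))
    (hbound : ∀ x ∈ Set.Icc A (A / η), |f x| ≤ μ) :
    (∫⁻ x in Set.Icc A (A / η),
        ENNReal.ofReal ((deriv f x) ^ 2 / (1 - f x ^ 2))) ≤
      ENNReal.ofReal ((c - c') ^ 2 / ((1 - μ ^ 2) * Real.log (1 / η) ^ 2 * A)) := by
  set L : ℝ := Real.log (1 / η) with hL
  have hA0 : (0:ℝ) < A := lt_of_lt_of_le one_pos hA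
  have hB : A < A / η := by
    rw [lt_div_iff₀ hη0]
    nlinarith
  have hL0 : 0 < L := Real.log_pos (one_lt_one_div hη0 hη1)
  have hμ2 : 0 < 1 - μ ^ 2 := by nlinarith
  set K : ℝ := (c - c') ^ 2 / ((1 - μ ^ 2) * L ^ 2) with hK
  have hK0 : 0 ≤ K := by positivity
  -- derivative of f
  have hderiv : ∀ x ∈ Set.Icc A (A / η), HasDerivAt f (-((c - c') / (L * x))) x := by
    intro x hx
    have hx0 : 0 < x := lt_of_lt_of_le hA0 hx.1
    have hfe : f = fun x => c' + (c - c') * Real.log (A / (η * x)) / L := funext hf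
    rw [hfe]
    have heq : (fun x : ℝ => A / (η * x)) = fun x : ℝ => (A / η) * x⁻¹ := by
      funext y
      rw [div_eq_mul_inv, div_eq_mul_inv, mul_inv]
      ring
    have hinner : HasDerivAt (fun x : ℝ => A / (η * x)) (A / η * -(x ^ 2)⁻¹) x := by
      rw [heq]
      exact (hasDerivAt_inv hx0.ne').const_mul (A / η)
    have hpos : A / (η * x) > 0 := by positivity
    have hlog := hinner.log hpos.ne'
    have h3 := ((hlog.const_mul (c - c')).div_const L).const_add c'
    refine h3.congr_deriv ?_
    have hη' : η ≠ 0 := hη0.ne'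
    have hx' : x ≠ 0 := hx0.ne'
    have hA' : A ≠ 0 := hA0.ne'
    have hL' : L ≠ 0 := hL0.ne'
    field_simp
    try ring
    try tauto
  have hderiv' : ∀ x ∈ Set.Icc A (A / η), deriv f x = -((c - c') / (L * x)) := fun x hx =>
    (hderiv x hx).deriv
  -- pointwise bound
  have hpt : ∀ x ∈ Set.Icc A (A / η),
      ENNReal.ofReal ((deriv f x) ^ 2 / (1 - f x ^ 2)) ≤ ENNReal.ofReal (K * (x ^ 2)⁻¹) := by
    intro x hx
    have hx0 : 0 < x := lt_of_lt_of_le hA0 hx.1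
    apply ENNReal.ofReal_le_ofReal
    rw [hderiv' x hx]
    have hfx : f x ^ 2 ≤ μ ^ 2 := by
      have := hbound x hx
      calc f x ^ 2 = |f x| ^ 2 := (sq_abs _).symm
        _ ≤ μ ^ 2 := pow_le_pow_left₀ (abs_nonneg _) this 2
    have h1 : (-((c - c') / (L * x))) ^ 2 = (c - c') ^ 2 / (L ^ 2 * x ^ 2) := by
      field_simp
    rw [h1]
    have h2 : (c - c') ^ 2 / (L ^ 2 * x ^ 2) / (1 - f x ^ 2)
        ≤ (c - c') ^ 2 / (L ^ 2 * x ^ 2) / (1 - μ ^ 2) := by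
      exact div_le_div_of_nonneg_left (by positivity) hμ2 (by linarith)
    refine h2.trans (le_of_eq ?_)
    rw [hK]
    have hL' : L ≠ 0 := hL0.ne'
    have hμ' : (1 : ℝ) - μ ^ 2 ≠ 0 := hμ2.ne'
    have hx' : x ≠ 0 := hx0.ne'
    field_simp
    try ring
    try tauto
  -- monotonicity of the integral
  have hmeas : Measurable fun x : ℝ => ENNReal.ofReal (K * (x ^ 2)⁻¹) := by
    measurability
  have hmono := setLIntegral_mono (μ := volume) hmeas hpt
  refine hmono.trans ?_
  -- compute the integral of the bound
  have hcont : ContinuousOn (fun x : ℝ => K * (x ^ 2)⁻¹) (Set.Icc A (A / η)) := by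
    apply ContinuousOn.mul continuousOn_const
    apply ContinuousOn.inv₀ (by fun_prop)
    intro x hx
    have hx0 : 0 < x := lt_of_lt_of_le hA0 hx.1
    positivity
  have hint : IntegrableOn (fun x : ℝ => K * (x ^ 2)⁻¹) (Set.Icc A (A / η)) :=
    hcont.integrableOn_Icc
  have hnn : 0 ≤ᵐ[volume.restrict (Set.Icc A (A / η))] fun x : ℝ => K * (x ^ 2)⁻¹ := by
    filter_upwards [ae_restrict_mem measurableSet_Icc] with x hx
    have hx0 : 0 < x := lt_of_lt_of_le hA0 hx.1
    positivity
  rw [← ofReal_integral_eq_lintegral_ofReal hint hnn]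
  apply ENNReal.ofReal_le_ofReal
  have hval : ∫ x in Set.Icc A (A / η), K * (x ^ 2)⁻¹ = K * (A⁻¹ - (A / η)⁻¹) := by
    rw [MeasureTheory.integral_Icc_eq_integral_Ioc,
      ← intervalIntegral.integral_of_le hB.le, intervalIntegral.integral_const_mul]
    congr 1
    have : ∫ x in A..(A / η), (x ^ 2)⁻¹ = -(A / η)⁻¹ - -A⁻¹ := by
      refine intervalIntegral.integral_eq_sub_of_hasDerivAt (f := fun x : ℝ => -x⁻¹) ?_ ?_
      · intro x hx
        rw [Set.uIcc_of_le hB.le] at hx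
        have hx0 : 0 < x := lt_of_lt_of_le hA0 hx.1
        simpa [Pi.neg_def] using (hasDerivAt_inv hx0.ne').neg
      · apply ContinuousOn.intervalIntegrable
        rw [Set.uIcc_of_le hB.le]
        apply ContinuousOn.inv₀ (by fun_prop)
        intro x hx
        have hx0 : 0 < x := lt_of_lt_of_le hA0 hx.1
        positivity
    rw [this]; ring
  rw [hval]
  have hBinv : 0 ≤ (A / η)⁻¹ := by positivity
  have : K * (A⁻¹ - (A / η)⁻¹) ≤ K * A⁻¹ := by nlinarith
  refine this.trans (le_of_eq ?_)
  rw [hK]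
  have hL' : L ≠ 0 := hL0.ne'
  have hμ' : (1 : ℝ) - μ ^ 2 ≠ 0 := hμ2.ne'
  have hA' : A ≠ 0 := hA0.ne'
  field_simp
  try ring
  try tauto
end

section
/- Let a ∈ ℝ, θ ∈ ℝ, let g : (−1, 1) → ℝ be differentiable with |g(x₃)| ≤ 1/2 for all x₃, and let φ₀ : (−1, 1) → ℝ be differentiable. On D = (a, a+1) × (−1, 1) define m₃(x) = (1 + a − x₁) · g(x₃), φ(x) = (1 + a − x₁) · φ₀(x₃) + (x₁ − a) · θ, and (m₁, m₂)(x) = √(1 − m₃(x)²) · (cos φ(x), sin φ(x)). Also set M(x₃) = √(1 − g(x₃)²) · (cos φ₀(x₃), sin φ₀(x₃)). Then for every x = (x₁, x₃) ∈ D: (i) |∂_{x₁} m₃(x)|² ≤ g(x₃)²; (ii) |∂_{x₃} m₃(x)|² ≤ |g'(x₃)|²; (iii) |∂_{x₁}(m₁, m₂)(x)|² ≤ g(x₃)² + |φ₀(x₃) − θ|²; (iv) |∂_{x₃}(m₁, m₂)(x)|² ≤ 2 |M'(x₃)|². -/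
lemma key_sumsq (u p : ℝ → ℝ) (u' p' x : ℝ)
    (hu : HasDerivAt u u' x) (hp : HasDerivAt p p' x) (h : (u x) ^ 2 < 1) :
    (deriv (fun t => Real.sqrt (1 - (u t) ^ 2) * Real.cos (p t)) x) ^ 2 +
    (deriv (fun t => Real.sqrt (1 - (u t) ^ 2) * Real.sin (p t)) x) ^ 2 =
    (u x * u') ^ 2 / (1 - (u x) ^ 2) + (1 - (u x) ^ 2) * p' ^ 2 := by
  have hpos : 0 < 1 - (u x) ^ 2 := by linarith
  set ρ := Real.sqrt (1 - (u x) ^ 2) with hρdef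
  have hρsq : ρ ^ 2 = 1 - (u x) ^ 2 := Real.sq_sqrt hpos.le
  have hρpos : 0 < ρ := Real.sqrt_pos.mpr hpos
  have hin : HasDerivAt (fun t => 1 - (u t) ^ 2) (-(2 * u x ^ 1 * u')) x :=
    (hu.pow 2).const_sub 1
  have hsqrt : HasDerivAt (fun t => Real.sqrt (1 - (u t) ^ 2))
      (-(2 * u x ^ 1 * u') / (2 * ρ)) x := hin.sqrt hpos.ne'
  have h1 : deriv (fun t => Real.sqrt (1 - (u t) ^ 2) * Real.cos (p t)) x
      = -(2 * u x ^ 1 * u') / (2 * ρ) * Real.cos (p x)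
        + ρ * (-Real.sin (p x) * p') := (hsqrt.mul hp.cos).deriv
  have h2 : deriv (fun t => Real.sqrt (1 - (u t) ^ 2) * Real.sin (p t)) x
      = -(2 * u x ^ 1 * u') / (2 * ρ) * Real.sin (p x)
        + ρ * (Real.cos (p x) * p') := (hsqrt.mul hp.sin).deriv
  have hsc : Real.sin (p x) ^ 2 + Real.cos (p x) ^ 2 = 1 := Real.sin_sq_add_cos_sq _
  rw [h1, h2, ← hρsq]
  field_simp
  linear_combination (u x ^ 2 * u' ^ 2 + ρ ^ 4 * p' ^ 2) * hsc

set_option maxHeartbeats 1000000 in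
/-- Interpolation estimates for the glued profile on `D = (a, a+1) × (−1, 1)`:
`m₃(x) = (1+a−x₁)·g(x₃)`, `φ(x) = (1+a−x₁)·φ₀(x₃) + (x₁−a)·θ`,
`(m₁,m₂)(x) = √(1−m₃(x)²)·(cos φ(x), sin φ(x))`,
`M(x₃) = √(1−g(x₃)²)·(cos φ₀(x₃), sin φ₀(x₃))`. -/
theorem stmt_13 (a θ : ℝ) (g φ₀ : ℝ → ℝ)
    (hg_diff : ∀ x₃ ∈ Set.Ioo (-1 : ℝ) 1, DifferentiableAt ℝ g x₃)
    (hg_bdd : ∀ x₃ ∈ Set.Ioo (-1 : ℝ) 1, |g x₃| ≤ 1 / 2)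
    (hφ_diff : ∀ x₃ ∈ Set.Ioo (-1 : ℝ) 1, DifferentiableAt ℝ φ₀ x₃)
    (x₁ x₃ : ℝ) (hx₁ : x₁ ∈ Set.Ioo a (a + 1)) (hx₃ : x₃ ∈ Set.Ioo (-1 : ℝ) 1) :
    (deriv (fun t => (1 + a - t) * g x₃) x₁) ^ 2 ≤ g x₃ ^ 2 ∧
    (deriv (fun s => (1 + a - x₁) * g s) x₃) ^ 2 ≤ (deriv g x₃) ^ 2 ∧
    (deriv (fun t => Real.sqrt (1 - ((1 + a - t) * g x₃) ^ 2) *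
        Real.cos ((1 + a - t) * φ₀ x₃ + (t - a) * θ)) x₁) ^ 2 +
      (deriv (fun t => Real.sqrt (1 - ((1 + a - t) * g x₃) ^ 2) *
        Real.sin ((1 + a - t) * φ₀ x₃ + (t - a) * θ)) x₁) ^ 2 ≤
      g x₃ ^ 2 + (φ₀ x₃ - θ) ^ 2 ∧
    (deriv (fun s => Real.sqrt (1 - ((1 + a - x₁) * g s) ^ 2) *
        Real.cos ((1 + a - x₁) * φ₀ s + (x₁ - a) * θ)) x₃) ^ 2 +
      (deriv (fun s => Real.sqrt (1 - ((1 + a - x₁) * g s) ^ 2) *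
        Real.sin ((1 + a - x₁) * φ₀ s + (x₁ - a) * θ)) x₃) ^ 2 ≤
      2 * ((deriv (fun s => Real.sqrt (1 - g s ^ 2) * Real.cos (φ₀ s)) x₃) ^ 2 +
        (deriv (fun s => Real.sqrt (1 - g s ^ 2) * Real.sin (φ₀ s)) x₃) ^ 2) := by
  obtain ⟨hx₁l, hx₁r⟩ := hx₁
  have hL0 : 0 < 1 + a - x₁ := by linarith
  have hL1 : 1 + a - x₁ ≤ 1 := by linarith
  have hA : g x₃ ^ 2 ≤ 1 / 4 := by
    have := hg_bdd x₃ hx₃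
    have h2 := abs_nonneg (g x₃)
    nlinarith [sq_abs (g x₃)]
  -- derivatives in x₁
  have hu1 : HasDerivAt (fun t => (1 + a - t) * g x₃) (-1 * g x₃) x₁ :=
    (((hasDerivAt_id x₁).const_sub (1 + a)).mul_const _)
  have hp1 : HasDerivAt (fun t => (1 + a - t) * φ₀ x₃ + (t - a) * θ)
      (-1 * φ₀ x₃ + 1 * θ) x₁ :=
    ((((hasDerivAt_id x₁).const_sub (1 + a)).mul_const _).add
      (((hasDerivAt_id x₁).sub_const a).mul_const θ))
  -- derivatives in x₃
  have hu2 : HasDerivAt (fun s => (1 + a - x₁) * g s)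
      ((1 + a - x₁) * deriv g x₃) x₃ :=
    ((hg_diff x₃ hx₃).hasDerivAt).const_mul _
  have hp2 : HasDerivAt (fun s => (1 + a - x₁) * φ₀ s + (x₁ - a) * θ)
      ((1 + a - x₁) * deriv φ₀ x₃) x₃ :=
    (((hφ_diff x₃ hx₃).hasDerivAt).const_mul _).add_const _
  have hL2 : (1 + a - x₁) ^ 2 ≤ 1 := pow_le_one₀ hL0.le hL1
  have hX : ((1 + a - x₁) * g x₃) ^ 2 ≤ 1 / 4 := by
    nlinarith [mul_nonneg (sub_nonneg.mpr hL2) (sq_nonneg (g x₃))]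
  have hlt : ((1 + a - x₁) * g x₃) ^ 2 < 1 := by nlinarith
  have hltr : g x₃ ^ 2 < 1 := by nlinarith
  have hd : 0 < 1 - ((1 + a - x₁) * g x₃) ^ 2 := by linarith
  have hdr : 0 < 1 - g x₃ ^ 2 := by linarith
  refine ⟨?_, ?_, ?_, ?_⟩
  · rw [hu1.deriv]; nlinarith [sq_nonneg (g x₃)]
  · rw [hu2.deriv]
    nlinarith [sq_nonneg (deriv g x₃), sq_nonneg ((1 + a - x₁) * deriv g x₃),
      mul_nonneg (mul_nonneg hL0.le (sub_nonneg.mpr hL1)) (sq_nonneg (deriv g x₃))]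
  · have h3 : (deriv (fun t => Real.sqrt (1 - ((1 + a - t) * g x₃) ^ 2) *
        Real.cos ((1 + a - t) * φ₀ x₃ + (t - a) * θ)) x₁) ^ 2 +
        (deriv (fun t => Real.sqrt (1 - ((1 + a - t) * g x₃) ^ 2) *
        Real.sin ((1 + a - t) * φ₀ x₃ + (t - a) * θ)) x₁) ^ 2 =
        ((1 + a - x₁) * g x₃ * (-1 * g x₃)) ^ 2 / (1 - ((1 + a - x₁) * g x₃) ^ 2) +
        (1 - ((1 + a - x₁) * g x₃) ^ 2) * (-1 * φ₀ x₃ + 1 * θ) ^ 2 :=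
      key_sumsq _ _ _ _ _ hu1 hp1 hlt
    rw [h3]
    have t1 : ((1 + a - x₁) * g x₃ * (-1 * g x₃)) ^ 2 /
        (1 - ((1 + a - x₁) * g x₃) ^ 2) ≤ g x₃ ^ 2 := by
      rw [div_le_iff₀ hd]
      nlinarith [mul_le_mul_of_nonneg_right hX (sq_nonneg (g x₃)), sq_nonneg (g x₃)]
    have t2 : (1 - ((1 + a - x₁) * g x₃) ^ 2) * (-1 * φ₀ x₃ + 1 * θ) ^ 2 ≤
        (φ₀ x₃ - θ) ^ 2 := by
      nlinarith [sq_nonneg (φ₀ x₃ - θ), sq_nonneg ((1 + a - x₁) * g x₃),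
        mul_nonneg (sq_nonneg ((1 + a - x₁) * g x₃)) (sq_nonneg (φ₀ x₃ - θ))]
    linarith
  · have h4 : (deriv (fun s => Real.sqrt (1 - ((1 + a - x₁) * g s) ^ 2) *
        Real.cos ((1 + a - x₁) * φ₀ s + (x₁ - a) * θ)) x₃) ^ 2 +
        (deriv (fun s => Real.sqrt (1 - ((1 + a - x₁) * g s) ^ 2) *
        Real.sin ((1 + a - x₁) * φ₀ s + (x₁ - a) * θ)) x₃) ^ 2 =
        ((1 + a - x₁) * g x₃ * ((1 + a - x₁) * deriv g x₃)) ^ 2 /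
          (1 - ((1 + a - x₁) * g x₃) ^ 2) +
        (1 - ((1 + a - x₁) * g x₃) ^ 2) * ((1 + a - x₁) * deriv φ₀ x₃) ^ 2 :=
      key_sumsq _ _ _ _ _ hu2 hp2 hlt
    have h5 : (deriv (fun s => Real.sqrt (1 - g s ^ 2) * Real.cos (φ₀ s)) x₃) ^ 2 +
        (deriv (fun s => Real.sqrt (1 - g s ^ 2) * Real.sin (φ₀ s)) x₃) ^ 2 =
        (g x₃ * deriv g x₃) ^ 2 / (1 - g x₃ ^ 2) +
        (1 - g x₃ ^ 2) * (deriv φ₀ x₃) ^ 2 :=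
      key_sumsq g φ₀ _ _ _ ((hg_diff x₃ hx₃).hasDerivAt)
        ((hφ_diff x₃ hx₃).hasDerivAt) hltr
    rw [h4, h5]
    have hL4 : (1 + a - x₁) ^ 4 ≤ 1 := pow_le_one₀ hL0.le hL1
    have t1 : ((1 + a - x₁) * g x₃ * ((1 + a - x₁) * deriv g x₃)) ^ 2 /
        (1 - ((1 + a - x₁) * g x₃) ^ 2) ≤
        (g x₃ * deriv g x₃) ^ 2 / (1 - g x₃ ^ 2) := by
      apply div_le_div₀ (sq_nonneg _) ?_ hdr ?_
      · nlinarith [mul_le_mul_of_nonneg_right hL4 (sq_nonneg (g x₃ * deriv g x₃))]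
      · nlinarith [mul_le_mul_of_nonneg_right hL2 (sq_nonneg (g x₃))]
    have t2 : (1 - ((1 + a - x₁) * g x₃) ^ 2) * ((1 + a - x₁) * deriv φ₀ x₃) ^ 2 ≤
        2 * ((1 - g x₃ ^ 2) * (deriv φ₀ x₃) ^ 2) := by
      nlinarith [mul_le_mul_of_nonneg_right hL2 (sq_nonneg (deriv φ₀ x₃)),
        mul_nonneg (sq_nonneg ((1 + a - x₁) * g x₃))
          (sq_nonneg ((1 + a - x₁) * deriv φ₀ x₃)),
        mul_le_mul_of_nonneg_right hA (sq_nonneg (deriv φ₀ x₃)),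
        sq_nonneg (deriv φ₀ x₃)]
    have t3 : 0 ≤ (g x₃ * deriv g x₃) ^ 2 / (1 - g x₃ ^ 2) :=
      div_nonneg (sq_nonneg _) hdr.le
    linarith
end

section
/- Define m₁ : ℝ → ℝ by m₁(x) = cos(πx/3) for |x| ≤ 1 and m₁(x) = 1 − |x|/(1 + x²) for |x| > 1. Then m₁ is continuous with |m₁(x)| < 1 for x ≠ 0, m₁ is differentiable off a finite set, and: (i) ∫_ℝ m₁'(x)² / (1 − m₁(x)²) dx < ∞, whereas (ii) ∫_ℝ ( 1 − m₁(x)² ) dx = ∞. -/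
open MeasureTheory Filter Set

noncomputable def f0 (x : ℝ) : ℝ :=
  if |x| ≤ 1 then Real.cos (Real.pi * x / 3) else 1 - |x| / (1 + x ^ 2)

lemma one_add_sq_pos (x : ℝ) : (0:ℝ) < 1 + x ^ 2 := by positivity

lemma f0_cont : Continuous f0 := by
  unfold f0
  apply Continuous.if_le
  · fun_prop
  · exact continuous_const.sub
      (continuous_abs.div (by fun_prop) (fun x => (one_add_sq_pos x).ne'))
  · exact continuous_abs
  · exact continuous_const
  · intro x hx
    rcases (abs_eq zero_le_one).mp hx with h | h <;> subst h
    · norm_num [Real.cos_pi_div_three]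
    · rw [show Real.pi * (-1) / 3 = -(Real.pi / 3) by ring, Real.cos_neg]
      norm_num [Real.cos_pi_div_three]

lemma f0_val_in {x : ℝ} (h : |x| ≤ 1) : f0 x = Real.cos (Real.pi * x / 3) := if_pos h

lemma f0_val_out {x : ℝ} (h : 1 < |x|) : f0 x = 1 - |x| / (1 + x ^ 2) :=
  if_neg (not_le.mpr h)

lemma abs_div_le_half {x : ℝ} : |x| / (1 + x ^ 2) ≤ 2⁻¹ := by
  rw [div_le_iff₀ (one_add_sq_pos x)]
  nlinarith [sq_nonneg (|x| - 1), sq_abs x]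


lemma theta_abs_lt {x : ℝ} (h : |x| ≤ 1) : |Real.pi * x / 3| < Real.pi / 2 := by
  rw [abs_div, abs_mul, abs_of_pos Real.pi_pos,
    show |(3:ℝ)| = 3 by norm_num, div_lt_div_iff₀ (by norm_num) (by norm_num)]
  nlinarith [Real.pi_pos]

lemma theta_ne {x : ℝ} (hx : x ≠ 0) : Real.pi * x / 3 ≠ 0 := by
  intro h0
  have hπx : Real.pi * x = 0 := by linarith
  rcases mul_eq_zero.mp hπx with h | h
  · exact Real.pi_ne_zero h
  · exact hx h

lemma sin_theta_ne {x : ℝ} (h : |x| ≤ 1) (hx : x ≠ 0) : Real.sin (Real.pi * x / 3) ≠ 0 := by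
  have habs := theta_abs_lt h
  have hne := theta_ne hx
  have hπ := Real.pi_pos
  rw [abs_lt] at habs
  rcases lt_trichotomy (Real.pi * x / 3) 0 with h1 | h1 | h1
  · exact (Real.sin_neg_of_neg_of_neg_pi_lt h1 (by linarith)).ne
  · exact absurd h1 hne
  · exact (Real.sin_pos_of_pos_of_lt_pi h1 (by linarith)).ne'

lemma f0_lt {x : ℝ} (hx : x ≠ 0) : |f0 x| < 1 := by
  rcases le_or_gt |x| 1 with h | h
  · rw [f0_val_in h]
    have hsin := sin_theta_ne h hx
    have hsq : Real.cos (Real.pi * x / 3) ^ 2 < 1 := by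
      nlinarith [Real.sin_sq_add_cos_sq (Real.pi * x / 3),
        pow_two_pos_of_ne_zero hsin]
    rw [← sq_abs] at hsq
    nlinarith [abs_nonneg (Real.cos (Real.pi * x / 3))]
  · rw [f0_val_out h]
    have h1 : |x| / (1 + x ^ 2) ≤ 2⁻¹ := abs_div_le_half
    have h2 : 0 < |x| / (1 + x ^ 2) := div_pos (by linarith) (one_add_sq_pos x)
    rw [abs_lt]; constructor <;> linarith

lemma f0_eq_cos {x : ℝ} (h : |x| < 1) :
    f0 =ᶠ[nhds x] fun y => Real.cos (Real.pi * y / 3) := by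
  have hs : IsOpen {y : ℝ | |y| < 1} := isOpen_lt continuous_abs continuous_const
  filter_upwards [hs.mem_nhds h] with y hy
  exact f0_val_in (le_of_lt hy)

lemma f0_eq_pos {x : ℝ} (h : 1 < x) :
    f0 =ᶠ[nhds x] fun y => 1 - y / (1 + y ^ 2) := by
  have hs : IsOpen {y : ℝ | 1 < y} := isOpen_lt continuous_const continuous_id
  filter_upwards [hs.mem_nhds h] with y (hy : 1 < y)
  rw [f0_val_out (by rw [abs_of_pos (by linarith)]; exact hy),
    abs_of_pos (by linarith : (0:ℝ) < y)]

lemma f0_eq_neg {x : ℝ} (h : x < -1) :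
    f0 =ᶠ[nhds x] fun y => 1 + y / (1 + y ^ 2) := by
  have hs : IsOpen {y : ℝ | y < -1} := isOpen_lt continuous_id continuous_const
  filter_upwards [hs.mem_nhds h] with y (hy : y < -1)
  rw [f0_val_out (by rw [abs_of_neg (by linarith)]; linarith),
    abs_of_neg (by linarith : y < (0:ℝ))]
  ring

lemma hasDerivAt_cospart (y : ℝ) :
    HasDerivAt (fun y => Real.cos (Real.pi * y / 3))
      (-Real.sin (Real.pi * y / 3) * (Real.pi / 3)) y := by
  have h1 : HasDerivAt (fun y : ℝ => Real.pi * y / 3) (Real.pi / 3) y := by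
    simpa [mul_comm] using ((hasDerivAt_id y).const_mul Real.pi).div_const 3
  exact h1.cos

lemma hasDerivAt_tail (y : ℝ) :
    HasDerivAt (fun y : ℝ => y / (1 + y ^ 2)) ((1 - y ^ 2) / (1 + y ^ 2) ^ 2) y := by
  have h := (hasDerivAt_id y).div ((hasDerivAt_pow 2 y).const_add 1)
    (one_add_sq_pos y).ne'
  refine h.congr_deriv ?_
  norm_num
  ring

lemma deriv_f0_cos {x : ℝ} (h : |x| < 1) :
    deriv f0 x = -Real.sin (Real.pi * x / 3) * (Real.pi / 3) := by
  rw [(f0_eq_cos h).deriv_eq]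
  exact (hasDerivAt_cospart x).deriv

lemma deriv_f0_pos {x : ℝ} (h : 1 < x) :
    deriv f0 x = -((1 - x ^ 2) / (1 + x ^ 2) ^ 2) := by
  rw [(f0_eq_pos h).deriv_eq]
  exact ((hasDerivAt_tail x).const_sub 1).deriv

lemma deriv_f0_neg {x : ℝ} (h : x < -1) :
    deriv f0 x = (1 - x ^ 2) / (1 + x ^ 2) ^ 2 := by
  rw [(f0_eq_neg h).deriv_eq]
  exact ((hasDerivAt_tail x).const_add 1).deriv

lemma f0_diff {x : ℝ} (h1 : x ≠ -1) (h2 : x ≠ 1) : DifferentiableAt ℝ f0 x := by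
  rcases lt_trichotomy |x| 1 with h | h | h
  · exact ((hasDerivAt_cospart x).differentiableAt).congr_of_eventuallyEq (f0_eq_cos h)
  · rcases (abs_eq zero_le_one).mp h with h | h
    · exact absurd h h2
    · exact absurd h h1
  · rcases le_or_gt 0 x with hx | hx
    · have hx1 : 1 < x := by rwa [abs_of_nonneg hx] at h
      exact (((hasDerivAt_tail x).const_sub 1).differentiableAt).congr_of_eventuallyEq
        (f0_eq_pos hx1)
    · have hx1 : x < -1 := by rw [abs_of_neg hx] at h; linarith
      exact (((hasDerivAt_tail x).const_add 1).differentiableAt).congr_of_eventuallyEq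
        (f0_eq_neg hx1)

lemma tail_key {x : ℝ} (ht : 1 < x) :
    ((1 - x ^ 2) / (1 + x ^ 2) ^ 2) ^ 2 / (1 - (1 - x / (1 + x ^ 2)) ^ 2)
      ≤ 3 / (1 + x ^ 2) := by
  have hd := one_add_sq_pos x
  have hs0 : 0 < x / (1 + x ^ 2) := div_pos (by linarith) hd
  have hs1 : x / (1 + x ^ 2) ≤ 2⁻¹ := by
    rw [div_le_iff₀ hd]; nlinarith [sq_nonneg (x - 1)]
  have hden : 0 < 1 - (1 - x / (1 + x ^ 2)) ^ 2 := by nlinarith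
  have e : 1 - (1 - x / (1 + x ^ 2)) ^ 2 = x * (2 + 2 * x ^ 2 - x) / (1 + x ^ 2) ^ 2 := by
    field_simp
    ring
  rw [div_le_div_iff₀ hden hd, e, div_pow, div_mul_eq_mul_div, mul_div_assoc',
    div_le_div_iff₀ (by positivity) (by positivity)]
  have ha : (1 - x ^ 2) ^ 2 ≤ (1 + x ^ 2) ^ 2 := by nlinarith
  have hb : (1 + x ^ 2) ≤ 3 * (x * (2 + 2 * x ^ 2 - x)) := by nlinarith
  calc (1 - x ^ 2) ^ 2 * (1 + x ^ 2) * (1 + x ^ 2) ^ 2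
      ≤ (1 + x ^ 2) ^ 2 * (1 + x ^ 2) * (1 + x ^ 2) ^ 2 := by nlinarith [sq_nonneg (1 + x ^ 2), one_add_sq_pos x]
    _ = (1 + x ^ 2) * (1 + x ^ 2) ^ 4 := by ring
    _ ≤ 3 * (x * (2 + 2 * x ^ 2 - x)) * (1 + x ^ 2) ^ 4 := by
        apply mul_le_mul_of_nonneg_right hb (by positivity)
    _ = 3 * (x * (2 + 2 * x ^ 2 - x)) * ((1 + x ^ 2) ^ 2) ^ 2 := by ring

lemma f0_key {x : ℝ} (h1 : x ≠ -1) (h2 : x ≠ 1) :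
    (deriv f0 x) ^ 2 / (1 - f0 x ^ 2) ≤ 3 / (1 + x ^ 2) := by
  rcases lt_trichotomy |x| 1 with h | h | h
  · by_cases hx0 : x = 0
    · subst hx0
      have : f0 0 = 1 := by simp [f0_val_in (by norm_num : |(0:ℝ)| ≤ 1)]
      rw [this]
      norm_num
    · rw [deriv_f0_cos h, f0_val_in h.le]
      set θ := Real.pi * x / 3 with hθdef
      have hsin : Real.sin θ ≠ 0 := sin_theta_ne h.le hx0
      have hcossq : 1 - Real.cos θ ^ 2 = Real.sin θ ^ 2 := by
        rw [Real.sin_sq]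
      rw [hcossq]
      have heq : (-Real.sin θ * (Real.pi / 3)) ^ 2 / Real.sin θ ^ 2 = (Real.pi / 3) ^ 2 := by
        field_simp
      rw [heq, div_pow, div_le_div_iff₀ (by norm_num) (one_add_sq_pos x)]
      have hx2 : x ^ 2 < 1 := by rw [← sq_abs]; nlinarith [abs_nonneg x]
      nlinarith [Real.pi_pos, Real.pi_lt_d2]
  · rcases (abs_eq zero_le_one).mp h with h | h
    · exact absurd h h2
    · exact absurd h h1
  · rcases le_or_gt 0 x with hx | hx
    · have hx1 : 1 < x := by rwa [abs_of_nonneg hx] at h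
      rw [deriv_f0_pos hx1, f0_val_out h, abs_of_nonneg hx, neg_sq]
      exact tail_key hx1
    · have hx1 : x < -1 := by rw [abs_of_neg hx] at h; linarith
      rw [deriv_f0_neg hx1, f0_val_out h, abs_of_neg hx]
      have hy1 : 1 < -x := by linarith
      have := tail_key hy1
      have e1 : ((1 - (-x) ^ 2) / (1 + (-x) ^ 2) ^ 2) ^ 2 = ((1 - x ^ 2) / (1 + x ^ 2) ^ 2) ^ 2 := by
        ring
      have e2 : (1 - (-x) / (1 + (-x) ^ 2)) ^ 2 = (1 - -x / (1 + x ^ 2)) ^ 2 := by ring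
      rw [e1, e2] at this
      convert this using 3 <;> ring

lemma lintegral_bound_finite :
    (∫⁻ x : ℝ, ENNReal.ofReal (3 / (1 + x ^ 2))) < ⊤ := by
  have hint : Integrable (fun x : ℝ => 3 / (1 + x ^ 2)) := by
    simpa [div_eq_mul_inv] using integrable_inv_one_add_sq.const_mul 3
  exact hint.lintegral_lt_top

theorem stmt_14 (m₁ : ℝ → ℝ)
    (hm : ∀ x : ℝ, m₁ x =
      if |x| ≤ 1 then Real.cos (Real.pi * x / 3) else 1 - |x| / (1 + x ^ 2)) :
    Continuous m₁ ∧
    (∀ x : ℝ, x ≠ 0 → |m₁ x| < 1) ∧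
    (∃ S : Finset ℝ, ∀ x ∉ (S : Set ℝ), DifferentiableAt ℝ m₁ x) ∧
    (∫⁻ x : ℝ, ENNReal.ofReal ((deriv m₁ x) ^ 2 / (1 - m₁ x ^ 2))) < ⊤ ∧
    (∫⁻ x : ℝ, ENNReal.ofReal (1 - m₁ x ^ 2)) = ⊤ := by
  have hmf : m₁ = f0 := funext fun x => (hm x).trans rfl
  subst hmf
  refine ⟨f0_cont, fun x hx => f0_lt hx, ⟨({-1, 1} : Finset ℝ), fun x hx => ?_⟩, ?_, ?_⟩
  · simp only [Finset.coe_insert, Finset.coe_singleton, Set.mem_insert_iff,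
      Set.mem_singleton_iff, not_or] at hx
    exact f0_diff hx.1 hx.2
  · -- finite exchange energy
    have hae : ∀ᵐ x : ℝ, ENNReal.ofReal ((deriv f0 x) ^ 2 / (1 - f0 x ^ 2))
        ≤ ENNReal.ofReal (3 / (1 + x ^ 2)) := by
      have hz : volume ({-1, 1} : Set ℝ) = 0 :=
        (Set.toFinite ({-1, 1} : Set ℝ)).measure_zero _
      rw [ae_iff]
      apply measure_mono_null _ hz
      intro x hx
      simp only [Set.mem_setOf_eq, not_le] at hx
      by_contra hmem
      simp only [Set.mem_insert_iff, Set.mem_singleton_iff, not_or] at hmem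
      exact absurd (ENNReal.ofReal_le_ofReal (f0_key hmem.1 hmem.2)) (not_le.mpr hx)
    exact lt_of_le_of_lt (lintegral_mono_ae hae) lintegral_bound_finite
  · -- infinite anisotropy energy
    by_contra hne
    have hlt : (∫⁻ x : ℝ, ENNReal.ofReal (1 - f0 x ^ 2)) < ⊤ := lt_top_iff_ne_top.mpr hne
    have hmeas : AEStronglyMeasurable (fun x : ℝ => 1 - f0 x ^ 2) volume :=
      (continuous_const.sub (f0_cont.pow 2)).aestronglyMeasurable
    have hpos : ∀ᵐ x : ℝ, (0:ℝ) ≤ 1 - f0 x ^ 2 := by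
      rw [ae_iff]
      apply measure_mono_null _ (measure_singleton (0:ℝ))
      intro x hx
      simp only [Set.mem_setOf_eq, Pi.zero_apply, not_le] at hx
      by_contra h0
      simp only [Set.mem_singleton_iff] at h0
      have := f0_lt h0
      nlinarith [abs_nonneg (f0 x), sq_abs (f0 x)]
    have hint : Integrable (fun x : ℝ => 1 - f0 x ^ 2) volume :=
      ⟨hmeas, (hasFiniteIntegral_iff_ofReal (hpos.mono fun x hx => by simpa using hx)).mpr hlt⟩
    have hone : IntegrableOn (fun x : ℝ => 1 - f0 x ^ 2) (Set.Ioi 1) volume :=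
      hint.integrableOn
    have h2 : IntegrableOn (fun x : ℝ => 2⁻¹ * x⁻¹) (Set.Ioi 1) volume := by
      apply hone.mono' ((measurable_inv.const_mul (2⁻¹:ℝ)).aestronglyMeasurable)
      filter_upwards [ae_restrict_mem measurableSet_Ioi] with x (hx : 1 < x)
      have hx0 : (0:ℝ) < x := by linarith
      have hd := one_add_sq_pos x
      rw [Real.norm_eq_abs, abs_of_nonneg (by positivity)]
      have hf : f0 x = 1 - x / (1 + x ^ 2) := by
        rw [f0_val_out (by rw [abs_of_pos hx0]; exact hx), abs_of_pos hx0]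
      rw [hf]
      have hs0 : 0 < x / (1 + x ^ 2) := div_pos hx0 hd
      have hs1 : x / (1 + x ^ 2) ≤ 2⁻¹ := by
        rw [div_le_iff₀ hd]; nlinarith [sq_nonneg (x - 1)]
      have step1 : (2:ℝ)⁻¹ * x⁻¹ ≤ x / (1 + x ^ 2) := by
        rw [inv_eq_one_div, inv_eq_one_div, div_mul_div_comm, one_mul,
          div_le_div_iff₀ (by linarith) hd]
        nlinarith
      have step2 : x / (1 + x ^ 2) ≤ 1 - (1 - x / (1 + x ^ 2)) ^ 2 := by nlinarith
      linarith
    have h3 : IntegrableOn (fun x : ℝ => x⁻¹) (Set.Ioi 1) volume := by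
      have := h2.const_mul 2
      simp [mul_assoc, ← mul_assoc] at this
      exact this
    have h4 : IntegrableOn (fun x : ℝ => x ^ (-1:ℝ)) (Set.Ioi 1) volume := by
      apply h3.congr_fun _ measurableSet_Ioi
      intro x hx
      exact (Real.rpow_neg_one x).symm
    rw [integrableOn_Ioi_rpow_iff zero_lt_one] at h4
    norm_num at h4
end

section
/- Let α ∈ (0, π/2], set c = cos α and β = 1 − c, let 0 < η ≤ 1/2 and L = ln(1/η). Define f : ℝ → ℝ by f(x) = 1 − (β ln 2 / (4L)) x² for |x| ≤ 2, f(x) = c + β · ln(1/(η|x|)) / L for 2 ≤ |x| ≤ 1/η, and f(x) = c for |x| ≥ 1/η. Then f is continuous, c ≤ f(x) ≤ 1 for all x with f(x) < 1 for x ≠ 0, and ∫_ℝ f'(x)² / (1 − f(x)²) dx ≤ 4 β / L, where f' is the a.e. derivative of f. -/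
open MeasureTheory

set_option maxHeartbeats 4000000 in
theorem stmt_16 (α : ℝ) (hα : α ∈ Set.Ioc 0 (Real.pi / 2))
    (η : ℝ) (hη0 : 0 < η) (hη : η ≤ 1 / 2)
    (f : ℝ → ℝ)
    (hf : ∀ x : ℝ, f x =
      if |x| ≤ 2 then
        1 - (1 - Real.cos α) * Real.log 2 / (4 * Real.log (1 / η)) * x ^ 2
      else if |x| ≤ 1 / η then
        Real.cos α + (1 - Real.cos α) * Real.log (1 / (η * |x|)) / Real.log (1 / η)
      else Real.cos α) :
    Continuous f ∧
    (∀ x : ℝ, Real.cos α ≤ f x ∧ f x ≤ 1) ∧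
    (∀ x : ℝ, x ≠ 0 → f x < 1) ∧
    (∫⁻ x : ℝ, ENNReal.ofReal ((deriv f x) ^ 2 / (1 - f x ^ 2))) ≤
      ENNReal.ofReal (4 * (1 - Real.cos α) / Real.log (1 / η)) := by
  obtain ⟨hα0, hα2⟩ := hα
  have hπ := Real.pi_pos
  set c := Real.cos α with hcdef
  have hc0 : 0 ≤ c := Real.cos_nonneg_of_mem_Icc ⟨by linarith, hα2⟩
  have hc1 : c < 1 := by
    have h := Real.strictAntiOn_cos ⟨le_refl 0, by linarith⟩
      ⟨hα0.le, by linarith⟩ hα0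
    simpa using h
  set β := 1 - c with hβdef
  have hβ0 : 0 < β := by simp only [hβdef]; linarith
  have hβ1 : β ≤ 1 := by simp only [hβdef]; linarith
  set L := Real.log (1 / η) with hLdef
  have h2η : (2:ℝ) ≤ 1 / η := by rw [le_div_iff₀ hη0]; linarith
  have hl2 : 0 < Real.log 2 := Real.log_pos one_lt_two
  have hL2 : Real.log 2 ≤ L := Real.log_le_log two_pos h2η
  have hL0 : 0 < L := lt_of_lt_of_le hl2 hL2
  set k := β * Real.log 2 / (4 * L) with hkdef
  have hk0 : 0 < k := by
    rw [hkdef]; exact div_pos (mul_pos hβ0 hl2) (by linarith)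
  have h4kval : 4 * k = β * Real.log 2 / L := by rw [hkdef]; field_simp
  have h4k : 4 * k ≤ β := by
    rw [h4kval, div_le_iff₀ hL0]; nlinarith
  -- value lemmas
  have hfin : ∀ x : ℝ, |x| ≤ 2 → f x = 1 - k * x ^ 2 := fun x hx => by
    rw [hf x, if_pos hx]
  have hlog_mid : ∀ x : ℝ, 2 < |x| →
      Real.log (1 / (η * |x|)) = L - Real.log |x| := by
    intro x hx
    have hx0 : |x| ≠ 0 := by intro h; rw [h] at hx; norm_num at hx
    rw [one_div, Real.log_inv, Real.log_mul hη0.ne' hx0, hLdef, one_div,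
      Real.log_inv]
    ring
  have hfmid : ∀ x : ℝ, 2 < |x| → |x| ≤ 1 / η →
      f x = c + β * (L - Real.log |x|) / L := by
    intro x h1 h2
    rw [hf x, if_neg (not_le.2 h1), if_pos h2, hlog_mid x h1]
  have hfout : ∀ x : ℝ, 1 / η < |x| → f x = c := by
    intro x h
    rw [hf x, if_neg (by push_neg; linarith), if_neg (not_le.2 h)]
  -- bounds
  have hbd : ∀ x : ℝ, c ≤ f x ∧ f x ≤ 1 := by
    intro x
    rcases le_or_gt |x| 2 with h1 | h1
    · rw [hfin x h1]
      have hx4 : x ^ 2 ≤ 4 := by nlinarith [sq_abs x, abs_nonneg x]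
      constructor
      · nlinarith [sq_nonneg x]
      · nlinarith [sq_nonneg x]
    · rcases le_or_gt |x| (1 / η) with h2 | h2
      · rw [hfmid x h1 h2]
        have hlx : Real.log 2 < Real.log |x| := Real.log_lt_log two_pos h1
        have hlxL : Real.log |x| ≤ L := Real.log_le_log (by linarith) h2
        constructor
        · have : 0 ≤ β * (L - Real.log |x|) / L :=
            div_nonneg (mul_nonneg hβ0.le (by linarith)) hL0.le
          linarith
        · have : β * (L - Real.log |x|) / L ≤ β := by
            rw [div_le_iff₀ hL0]; nlinarith
          simp only [hβdef] at this ⊢; linarith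
      · rw [hfout x h2]; exact ⟨le_refl c, hc1.le⟩
  have hlt : ∀ x : ℝ, x ≠ 0 → f x < 1 := by
    intro x hx
    rcases le_or_gt |x| 2 with h1 | h1
    · rw [hfin x h1]
      have : 0 < x ^ 2 := by positivity
      nlinarith
    · rcases le_or_gt |x| (1 / η) with h2 | h2
      · rw [hfmid x h1 h2]
        have hlx : Real.log 2 < Real.log |x| := Real.log_lt_log two_pos h1
        have hlxL : Real.log |x| ≤ L := Real.log_le_log (by linarith) h2
        have : β * (L - Real.log |x|) / L < β := by
          rw [div_lt_iff₀ hL0]; nlinarith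
        simp only [hβdef] at this ⊢; linarith
      · rw [hfout x h2]; exact hc1
  -- continuity
  have hcont : Continuous f := by
    have hmin : ∀ x : ℝ, (0:ℝ) < η * min (max |x| 2) (1 / η) := by
      intro x
      have : (0:ℝ) < min (max |x| 2) (1 / η) :=
        lt_min (lt_of_lt_of_le two_pos (le_max_right _ _)) (by linarith)
      positivity
    have hfeq : f = fun x => if |x| ≤ 2 then 1 - k * x ^ 2 else
        c + β * Real.log (1 / (η * min (max |x| 2) (1 / η))) / L := by
      funext x
      rcases le_or_gt |x| 2 with h1 | h1
      · simp only [hf x, if_pos h1]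
      · rw [if_neg (not_le.2 h1)]
        rcases le_or_gt |x| (1 / η) with h2 | h2
        · have hm : min (max |x| 2) (1 / η) = |x| := by
            rw [max_eq_left (le_of_lt h1)]
            exact min_eq_left h2
          rw [hf x, if_neg (not_le.2 h1), if_pos h2, hm]
        · have hm : min (max |x| 2) (1 / η) = 1 / η := by
            rw [max_eq_left (by linarith : (2:ℝ) ≤ |x|)]
            exact min_eq_right h2.le
          rw [hfout x h2, hm, mul_one_div_cancel hη0.ne']
          norm_num
    rw [hfeq]
    apply Continuous.if_le
    · exact continuous_const.sub (continuous_const.mul (continuous_pow 2))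
    · have hc2 : Continuous fun x : ℝ => η * min (max |x| 2) (1 / η) :=
        continuous_const.mul ((continuous_abs.max continuous_const).min
          continuous_const)
      have hc3 : Continuous fun x : ℝ => 1 / (η * min (max |x| 2) (1 / η)) :=
        continuous_const.div hc2 fun x => (hmin x).ne'
      have hc4 : Continuous fun x : ℝ =>
          Real.log (1 / (η * min (max |x| 2) (1 / η))) :=
        hc3.log fun x => by positivity
      exact continuous_const.add ((continuous_const.mul hc4).div_const L)
    · exact continuous_abs
    · exact continuous_const
    · intro x hx
      have hx2 : x ^ 2 = 4 := by rw [← sq_abs, hx]; norm_num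
      have hm : min (max |x| 2) (1 / η) = 2 := by
        rw [hx, max_self]
        exact min_eq_left h2η
      rw [hm, hx2]
      have hlog : Real.log (1 / (η * 2)) = L - Real.log 2 := by
        rw [one_div, Real.log_inv, Real.log_mul hη0.ne' two_ne_zero, hLdef,
          one_div, Real.log_inv]
        ring
      rw [hlog, hkdef, hβdef]
      field_simp
      ring
  refine ⟨hcont, hbd, hlt, ?_⟩
  set a := β / (L * Real.log 2) with hadef
  have ha0 : 0 < a := div_pos hβ0 (by positivity)
  set s2 : Set ℝ := {x | 2 < |x|} ∩ {x | |x| ≤ 4} with hs2def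
  set s3 : Set ℝ := {x | 4 < |x|} with hs3def
  have hs2m : MeasurableSet s2 :=
    (measurableSet_lt measurable_const continuous_abs.measurable).inter
      (measurableSet_le continuous_abs.measurable measurable_const)
  have hs3m : MeasurableSet s3 :=
    measurableSet_lt measurable_const continuous_abs.measurable
  set g1 : ℝ → ENNReal :=
    (Set.Icc (-2:ℝ) 2).indicator fun _ => ENNReal.ofReal (4 * k) with hg1
  set g2 : ℝ → ENNReal :=
    s2.indicator fun x => ENNReal.ofReal (a / x ^ 2) with hg2
  set g3 : ℝ → ENNReal :=
    s3.indicator fun x => ENNReal.ofReal (a / (2 * x ^ 2)) with hg3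
  -- pointwise bound away from bad points
  have key : ∀ x : ℝ, x ≠ 0 → |x| ≠ 2 → |x| ≠ 1 / η →
      ENNReal.ofReal (deriv f x ^ 2 / (1 - f x ^ 2)) ≤ g1 x + g2 x + g3 x := by
    intro x hx0 hx2 hxη
    rcases hx2.lt_or_gt with h2 | h2
    · -- |x| < 2
      have hev : f =ᶠ[nhds x] fun y => 1 - k * y ^ 2 := by
        have hmem : Set.Ioo (-2:ℝ) 2 ∈ nhds x :=
          Ioo_mem_nhds (abs_lt.mp h2).1 (abs_lt.mp h2).2
        filter_upwards [hmem] with y hy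
        exact hfin y (abs_le.mpr ⟨hy.1.le, hy.2.le⟩)
      have hd : HasDerivAt f (-(2 * k * x)) x := by
        have h' := ((hasDerivAt_pow 2 x).const_mul k).const_sub (1:ℝ)
        have h'' := h'.congr_of_eventuallyEq hev
        rw [show -(2 * k * x) = -(k * (((2:ℕ):ℝ) * x ^ (2 - 1))) by push_cast; ring]
        exact h''
      have hD : deriv f x = -(2 * k * x) := hd.deriv
      have hfx : f x = 1 - k * x ^ 2 := hfin x h2.le
      have hx4 : x ^ 2 ≤ 4 := by nlinarith [sq_abs x, abs_nonneg x]
      have hxpos : 0 < x ^ 2 := by positivity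
      have hkx : k * x ^ 2 ≤ 1 := by nlinarith [mul_le_mul_of_nonneg_left hx4 hk0.le]
      have hden : k * x ^ 2 ≤ 1 - f x ^ 2 := by
        rw [hfx]; nlinarith [mul_pos hk0 hxpos]
      have hdenpos : 0 < 1 - f x ^ 2 :=
        lt_of_lt_of_le (by positivity) hden
      have hratio : deriv f x ^ 2 / (1 - f x ^ 2) ≤ 4 * k := by
        rw [hD, div_le_iff₀ hdenpos]
        nlinarith [mul_le_mul_of_nonneg_left hden
          (by positivity : (0:ℝ) ≤ 4 * k)]
      have hmem : x ∈ Set.Icc (-2:ℝ) 2 := abs_le.mp h2.le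
      calc ENNReal.ofReal (deriv f x ^ 2 / (1 - f x ^ 2))
          ≤ ENNReal.ofReal (4 * k) := ENNReal.ofReal_le_ofReal hratio
        _ = g1 x := by rw [hg1, Set.indicator_of_mem hmem]
        _ ≤ g1 x + g2 x + g3 x := le_add_right (le_add_right le_rfl)
    · rcases hxη.lt_or_gt with hη1 | hη1
      · -- 2 < |x| < 1/η
        have hop : IsOpen {y : ℝ | 2 < |y| ∧ |y| < 1 / η} :=
          (isOpen_lt continuous_const continuous_abs).inter
            (isOpen_lt continuous_abs continuous_const)
        have hev : f =ᶠ[nhds x] fun y => c + β * (L - Real.log y) / L := by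
          filter_upwards [hop.mem_nhds ⟨h2, hη1⟩] with y hy
          rw [hfmid y hy.1 hy.2.le, Real.log_abs]
        have hd : HasDerivAt f (β * -x⁻¹ / L) x := by
          have h1 := ((Real.hasDerivAt_log hx0).const_sub L).const_mul β
          exact ((h1.div_const L).const_add c).congr_of_eventuallyEq hev
        have hD : deriv f x = β * -x⁻¹ / L := hd.deriv
        have hxabs : (0:ℝ) < |x| := abs_pos.mpr hx0
        have hlog2 : Real.log 2 < Real.log |x| := Real.log_lt_log two_pos h2
        have hfx1 : f x ≤ 1 := (hbd x).2
        have hfx0 : 0 ≤ f x := le_trans hc0 (hbd x).1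
        have h1mf : 1 - f x = β * Real.log |x| / L := by
          rw [hfmid x h2 hη1.le]; field_simp; ring
        have hder2 : deriv f x ^ 2 = β ^ 2 / (L ^ 2 * x ^ 2) := by
          rw [hD]; field_simp
        have hgen : ∀ m : ℝ, 0 < m → m ≤ Real.log |x| →
            deriv f x ^ 2 / (1 - f x ^ 2) ≤ β / (L * m * x ^ 2) := by
          intro m hm0 hm
          have hden : β * m / L ≤ 1 - f x ^ 2 := by
            have h1 : β * m / L ≤ 1 - f x := by rw [h1mf]; gcongr
            nlinarith
          have hdenpos : 0 < 1 - f x ^ 2 :=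
            lt_of_lt_of_le (by positivity) hden
          have hx2p : (0:ℝ) < x ^ 2 := by positivity
          calc deriv f x ^ 2 / (1 - f x ^ 2)
              ≤ deriv f x ^ 2 / (β * m / L) := by
                apply div_le_div_of_nonneg_left (by positivity)
                  (by positivity) hden
            _ = β / (L * m * x ^ 2) := by rw [hder2]; field_simp
        rcases le_or_gt |x| 4 with h4 | h4
        · have hb := hgen (Real.log 2) hl2 hlog2.le
          have hmem : x ∈ s2 := ⟨h2, h4⟩
          calc ENNReal.ofReal (deriv f x ^ 2 / (1 - f x ^ 2))
              ≤ ENNReal.ofReal (a / x ^ 2) := by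
                apply ENNReal.ofReal_le_ofReal
                calc deriv f x ^ 2 / (1 - f x ^ 2)
                    ≤ β / (L * Real.log 2 * x ^ 2) := hb
                  _ = a / x ^ 2 := by rw [hadef]; ring
            _ = g2 x := by rw [hg2, Set.indicator_of_mem hmem]
            _ ≤ g1 x + g2 x + g3 x := le_add_right le_add_self
        · have hlog4 : Real.log 4 = 2 * Real.log 2 := by
            rw [show (4:ℝ) = 2 ^ 2 by norm_num, Real.log_pow]; push_cast; ring
          have hm4 : 2 * Real.log 2 ≤ Real.log |x| := by
            rw [← hlog4]
            exact Real.log_le_log (by norm_num) h4.le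
          have hb := hgen (2 * Real.log 2) (by positivity) hm4
          have hmem : x ∈ s3 := h4
          calc ENNReal.ofReal (deriv f x ^ 2 / (1 - f x ^ 2))
              ≤ ENNReal.ofReal (a / (2 * x ^ 2)) := by
                apply ENNReal.ofReal_le_ofReal
                calc deriv f x ^ 2 / (1 - f x ^ 2)
                    ≤ β / (L * (2 * Real.log 2) * x ^ 2) := hb
                  _ = a / (2 * x ^ 2) := by rw [hadef]; ring
            _ = g3 x := by rw [hg3, Set.indicator_of_mem hmem]
            _ ≤ g1 x + g2 x + g3 x := le_add_self
      · -- 1/η < |x| : f locally constant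
        have hop : IsOpen {y : ℝ | 1 / η < |y|} :=
          isOpen_lt continuous_const continuous_abs
        have hev : f =ᶠ[nhds x] fun _ => c := by
          filter_upwards [hop.mem_nhds hη1] with y hy
          exact hfout y hy
        have hD : deriv f x = 0 := by rw [hev.deriv_eq, deriv_const]
        rw [hD]
        simp
  -- a.e. bound
  have hae : ∀ᵐ x : ℝ, ENNReal.ofReal (deriv f x ^ 2 / (1 - f x ^ 2)) ≤
      g1 x + g2 x + g3 x := by
    have hcnt : (({0, 2, -2, 1/η, -(1/η)} : Set ℝ)).Countable :=
      (Set.toFinite _).countable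
    have hm0 : volume ({0, 2, -2, 1/η, -(1/η)} : Set ℝ) = 0 :=
      hcnt.measure_zero _
    filter_upwards [measure_eq_zero_iff_ae_notMem.mp hm0] with x hx
    simp only [Set.mem_insert_iff, Set.mem_singleton_iff, not_or] at hx
    obtain ⟨h0, ha2, ha2', hb1, hb2⟩ := hx
    refine key x h0 ?_ ?_
    · intro h
      rcases (abs_eq (by norm_num : (0:ℝ) ≤ 2)).mp h with h | h
      exacts [ha2 h, ha2' h]
    · intro h
      rcases (abs_eq (by linarith : (0:ℝ) ≤ 1/η)).mp h with h | h
      exacts [hb1 h, hb2 h]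
  -- measurability
  have hmg2 : Measurable g2 :=
    ((measurable_const.div ((measurable_id.pow_const 2))).ennreal_ofReal).indicator hs2m
  have hmg3 : Measurable g3 :=
    ((measurable_const.div
      (measurable_const.mul (measurable_id.pow_const 2))).ennreal_ofReal).indicator hs3m
  -- integral of g1
  have hI1 : ∫⁻ x, g1 x ≤ ENNReal.ofReal (16 * k) := by
    rw [hg1, lintegral_indicator measurableSet_Icc, setLIntegral_const,
      Real.volume_Icc, ← ENNReal.ofReal_mul (by positivity)]
    apply le_of_eq; congr 1; norm_num; ring
  -- symmetric transfer lemma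
  have hneg : ∀ (F : ℝ → ENNReal) (s : Set ℝ),
      ∫⁻ x in Neg.neg ⁻¹' s, F (-x) = ∫⁻ x in s, F x := by
    intro F s
    exact (Measure.measurePreserving_neg volume).setLIntegral_comp_preimage_emb
      measurableEmbedding_neg F s
  -- integral of g2
  have hIcc : ∫⁻ x in Set.Icc (2:ℝ) 4, ENNReal.ofReal (a / x ^ 2) ≤
      ENNReal.ofReal (a / 4) := by
    have hcont4 : ContinuousOn (fun x : ℝ => a / x ^ 2) (Set.Icc 2 4) := by
      apply ContinuousOn.div continuousOn_const (continuous_pow 2).continuousOn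
      intro x hx
      have h1 := hx.1
      positivity
    have hint : IntegrableOn (fun x : ℝ => a / x ^ 2) (Set.Icc 2 4) :=
      hcont4.integrableOn_compact isCompact_Icc
    rw [← ofReal_integral_eq_lintegral_ofReal hint
      (Filter.Eventually.of_forall fun x => by positivity)]
    apply ENNReal.ofReal_le_ofReal
    have hch : ∫ x in Set.Icc (2:ℝ) 4, a / x ^ 2 = ∫ x in (2:ℝ)..4, a / x ^ 2 := by
      rw [intervalIntegral.integral_of_le (by norm_num : (2:ℝ) ≤ 4),
        MeasureTheory.integral_Icc_eq_integral_Ioc]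
    rw [hch]
    have h2 : ∫ x in (2:ℝ)..4, a / x ^ 2 = a * ∫ x in (2:ℝ)..4, x ^ (-2:ℤ) := by
      rw [← intervalIntegral.integral_const_mul]
      apply intervalIntegral.integral_congr
      intro x hx
      rw [Set.uIcc_of_le (by norm_num : (2:ℝ) ≤ 4)] at hx
      have hx0 : x ≠ 0 := by have := hx.1; intro h; rw [h] at this; norm_num at this
      show a / x ^ 2 = a * x ^ (-2:ℤ)
      have hzp : (x:ℝ) ^ (-2:ℤ) = (x ^ 2)⁻¹ := by
        rw [zpow_neg, zpow_two, sq]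
      rw [hzp, div_eq_mul_inv]
    rw [h2, integral_zpow (Or.inr ⟨by norm_num, by
      rw [Set.uIcc_of_le (by norm_num : (2:ℝ) ≤ 4)]
      norm_num⟩)]
    norm_num
    linarith
  have hI2 : ∫⁻ x, g2 x ≤ ENNReal.ofReal (a / 4) + ENNReal.ofReal (a / 4) := by
    rw [hg2, lintegral_indicator hs2m]
    have hsub : s2 ⊆ Set.Icc (-4:ℝ) (-2) ∪ Set.Icc 2 4 := by
      rintro x ⟨h1, h2⟩
      simp only [Set.mem_setOf_eq] at h1 h2
      rcases le_or_gt 0 x with hx | hx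
      · right
        rw [abs_of_nonneg hx] at h1 h2
        exact ⟨h1.le, h2⟩
      · left
        rw [abs_of_neg hx] at h1 h2
        constructor <;> linarith
    calc ∫⁻ x in s2, ENNReal.ofReal (a / x ^ 2)
        ≤ ∫⁻ x in Set.Icc (-4:ℝ) (-2) ∪ Set.Icc 2 4,
            ENNReal.ofReal (a / x ^ 2) := lintegral_mono_set hsub
      _ ≤ (∫⁻ x in Set.Icc (-4:ℝ) (-2), ENNReal.ofReal (a / x ^ 2)) +
          ∫⁻ x in Set.Icc (2:ℝ) 4, ENNReal.ofReal (a / x ^ 2) :=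
            lintegral_union_le _ _ _
      _ ≤ ENNReal.ofReal (a / 4) + ENNReal.ofReal (a / 4) := by
          apply add_le_add _ hIcc
          have hpre : Neg.neg ⁻¹' (Set.Icc (-4:ℝ) (-2)) = Set.Icc (2:ℝ) 4 := by
            ext y
            simp only [Set.mem_preimage, Set.mem_Icc]
            constructor <;> intro hy <;> constructor <;> linarith [hy.1, hy.2]
          have := hneg (fun x => ENNReal.ofReal (a / x ^ 2)) (Set.Icc (-4:ℝ) (-2))
          rw [hpre] at this
          rw [← this]
          calc ∫⁻ x in Set.Icc (2:ℝ) 4, ENNReal.ofReal (a / (-x) ^ 2)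
              = ∫⁻ x in Set.Icc (2:ℝ) 4, ENNReal.ofReal (a / x ^ 2) := by
                apply lintegral_congr
                intro y
                congr 1
                ring
            _ ≤ ENNReal.ofReal (a / 4) := hIcc
  -- integral of g3
  have hIoi : ∫⁻ x in Set.Ioi (4:ℝ), ENNReal.ofReal (a / (2 * x ^ 2)) ≤
      ENNReal.ofReal (a / 8) := by
    have hintr : IntegrableOn (fun x : ℝ => (a/2) * x ^ (-2:ℝ)) (Set.Ioi 4) :=
      (integrableOn_Ioi_rpow_of_lt (by norm_num : (-2:ℝ) < -1)
        (by norm_num : (0:ℝ) < 4)).const_mul (a/2)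
    have heq : ∀ x ∈ Set.Ioi (4:ℝ), (a/2) * x ^ (-2:ℝ) = a / (2 * x ^ 2) := by
      intro x hx
      have hx0 : (0:ℝ) < x := by have := hx; simp at this; linarith
      rw [Real.rpow_neg hx0.le, Real.rpow_two]
      field_simp
    have hint : IntegrableOn (fun x : ℝ => a / (2 * x ^ 2)) (Set.Ioi 4) := by
      apply hintr.congr_fun heq measurableSet_Ioi
    rw [← ofReal_integral_eq_lintegral_ofReal hint
      (Filter.Eventually.of_forall fun x => by positivity)]
    apply ENNReal.ofReal_le_ofReal
    have h2 : ∫ x in Set.Ioi (4:ℝ), a / (2 * x ^ 2) =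
        ∫ x in Set.Ioi (4:ℝ), (a/2) * x ^ (-2:ℝ) := by
      apply setIntegral_congr_fun measurableSet_Ioi
      intro x hx
      exact (heq x hx).symm
    rw [h2, integral_const_mul,
      integral_Ioi_rpow_of_lt (by norm_num) (by norm_num)]
    rw [show (-2:ℝ) + 1 = -1 by norm_num, Real.rpow_neg_one]
    norm_num
    linarith
  have hI3 : ∫⁻ x, g3 x ≤ ENNReal.ofReal (a / 8) + ENNReal.ofReal (a / 8) := by
    rw [hg3, lintegral_indicator hs3m]
    have hsub : s3 ⊆ Set.Iio (-4:ℝ) ∪ Set.Ioi 4 := by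
      intro x h1
      rcases le_or_gt 0 x with hx | hx
      · right
        rw [Set.mem_setOf_eq, abs_of_nonneg hx] at h1
        exact h1
      · left
        rw [Set.mem_setOf_eq, abs_of_neg hx] at h1
        simp only [Set.mem_Iio]
        linarith
    calc ∫⁻ x in s3, ENNReal.ofReal (a / (2 * x ^ 2))
        ≤ ∫⁻ x in Set.Iio (-4:ℝ) ∪ Set.Ioi 4,
            ENNReal.ofReal (a / (2 * x ^ 2)) := lintegral_mono_set hsub
      _ ≤ (∫⁻ x in Set.Iio (-4:ℝ), ENNReal.ofReal (a / (2 * x ^ 2))) +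
          ∫⁻ x in Set.Ioi (4:ℝ), ENNReal.ofReal (a / (2 * x ^ 2)) :=
            lintegral_union_le _ _ _
      _ ≤ ENNReal.ofReal (a / 8) + ENNReal.ofReal (a / 8) := by
          apply add_le_add _ hIoi
          have hpre : Neg.neg ⁻¹' (Set.Iio (-4:ℝ)) = Set.Ioi (4:ℝ) := by
            ext y
            simp only [Set.mem_preimage, Set.mem_Iio, Set.mem_Ioi]
            constructor <;> intro hy <;> linarith
          have := hneg (fun x => ENNReal.ofReal (a / (2 * x ^ 2))) (Set.Iio (-4:ℝ))
          rw [hpre] at this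
          rw [← this]
          calc ∫⁻ x in Set.Ioi (4:ℝ), ENNReal.ofReal (a / (2 * (-x) ^ 2))
              = ∫⁻ x in Set.Ioi (4:ℝ), ENNReal.ofReal (a / (2 * x ^ 2)) := by
                apply lintegral_congr
                intro y
                congr 1
                ring
            _ ≤ ENNReal.ofReal (a / 8) := hIoi
  -- final combination
  have hfinal : 16 * k + (a / 4 + a / 4) + (a / 8 + a / 8) ≤ 4 * β / L := by
    have ht1 : (0.6931471803:ℝ) < Real.log 2 := Real.log_two_gt_d9
    have ht2 : Real.log 2 < 0.6931471808 := Real.log_two_lt_d9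
    have heq : 16 * k + (a / 4 + a / 4) + (a / 8 + a / 8) =
        β * (16 * Real.log 2 ^ 2 + 3) / (4 * Real.log 2 * L) := by
      rw [hkdef, hadef]; field_simp; ring
    rw [heq, div_le_div_iff₀ (by positivity) hL0]
    nlinarith [mul_nonneg hβ0.le hL0.le,
      mul_nonneg (mul_nonneg hβ0.le hL0.le)
        (show (0:ℝ) ≤ 16 * Real.log 2 - (16 * Real.log 2 ^ 2 + 3) by nlinarith)]
  calc ∫⁻ x : ℝ, ENNReal.ofReal (deriv f x ^ 2 / (1 - f x ^ 2))
      ≤ ∫⁻ x, (g1 x + g2 x + g3 x) := lintegral_mono_ae hae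
    _ = (∫⁻ x, g1 x + g2 x) + ∫⁻ x, g3 x := lintegral_add_right _ hmg3
    _ = ((∫⁻ x, g1 x) + ∫⁻ x, g2 x) + ∫⁻ x, g3 x := by
        rw [lintegral_add_right _ hmg2]
    _ ≤ (ENNReal.ofReal (16 * k) + (ENNReal.ofReal (a / 4) + ENNReal.ofReal (a / 4))) +
        (ENNReal.ofReal (a / 8) + ENNReal.ofReal (a / 8)) :=
          add_le_add (add_le_add hI1 hI2) hI3
    _ ≤ ENNReal.ofReal (4 * β / L) := by
        rw [← ENNReal.ofReal_add (by positivity) (by positivity),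
          ← ENNReal.ofReal_add (by positivity) (by positivity),
          ← ENNReal.ofReal_add (by positivity) (by positivity),
          ← ENNReal.ofReal_add (by positivity) (by positivity)]
        exact ENNReal.ofReal_le_ofReal hfinal
end
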